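/- Coreset size bound: let (T_ℓ, par_ℓ) be a cover tree on a finite set S in a metric space of doubling dimension D, let k ≥ 1, and let ℓ(k) be a level with |T_{ℓ(k)}| ≤ k. Let 0 < ε ≤ 8 and suppose ℓ* = ℓ(k) − ⌈log₂(8/ε)⌉ satisfies ℓ* ≥ ℓ_min. Then |T_{ℓ*}| ≤ k · 2^{(⌈log₂(8/ε)⌉ + 2)·D} ≤ k · (64/ε)^D. -/
import Mathlib


/-- A cover tree on a finite nonempty set `S` in a metric space: for each level
`ℓ ∈ [lmin, lmax]` a finite set `T ℓ ⊆ S` (with `T lmax` a singleton), and for each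
`ℓ ∈ [lmin, lmax)` a parent map `par ℓ : T ℓ → T (ℓ+1)`, such that
(1) `T (ℓ+1) ⊆ T ℓ`; (2) `dist u (par ℓ u) ≤ 2^(ℓ+1)`; (3) distinct points of `T ℓ` are at
distance greater than `2^ℓ`. -/
structure CoverTree (X : Type*) [MetricSpace X] (S : Set X) where
  lmin : ℤ
  lmax : ℤ
  lmin_le_lmax : lmin ≤ lmax
  T : ℤ → Set X
  T_subset : ∀ ℓ : ℤ, lmin ≤ ℓ → ℓ ≤ lmax → T ℓ ⊆ S
  T_finite : ∀ ℓ : ℤ, lmin ≤ ℓ → ℓ ≤ lmax → (T ℓ).Finite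
  T_top_singleton : ∃ x : X, T lmax = {x}
  par : ℤ → X → X
  nested : ∀ ℓ : ℤ, lmin ≤ ℓ → ℓ < lmax → T (ℓ + 1) ⊆ T ℓ
  par_mem : ∀ ℓ : ℤ, lmin ≤ ℓ → ℓ < lmax → ∀ u ∈ T ℓ, par ℓ u ∈ T (ℓ + 1)
  par_dist : ∀ ℓ : ℤ, lmin ≤ ℓ → ℓ < lmax → ∀ u ∈ T ℓ, dist u (par ℓ u) ≤ (2 : ℝ) ^ (ℓ + 1)
  separated : ∀ ℓ : ℤ, lmin ≤ ℓ → ℓ ≤ lmax →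
    ∀ u ∈ T ℓ, ∀ v ∈ T ℓ, u ≠ v → (2 : ℝ) ^ ℓ < dist u v

/-- A metric space has doubling dimension `D` if every closed ball of radius `ρ > 0`
is contained in the union of at most `2^D` closed balls of radius `ρ/2`. -/
def HasDoublingDim (X : Type*) [MetricSpace X] (D : ℕ) : Prop :=
  ∀ (x : X) (ρ : ℝ), 0 < ρ → ∃ F : Finset X,
    F.card ≤ 2 ^ D ∧ Metric.closedBall x ρ ⊆ ⋃ c ∈ F, Metric.closedBall c (ρ / 2)

attribute [local instance] Classical.decEq
open Metric

/-- Iterated doubling: a closed ball of radius `ρ` is covered by `2^(j*D)` closed balls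
of radius `ρ / 2^j`. -/
lemma cover_iter {X : Type*} [MetricSpace X] {D : ℕ} (hD : HasDoublingDim X D)
    (j : ℕ) (x : X) (ρ : ℝ) (hρ : 0 < ρ) :
    ∃ F : Finset X, F.card ≤ 2 ^ (j * D) ∧
      closedBall x ρ ⊆ ⋃ c ∈ F, closedBall c (ρ / 2 ^ j) := by
  induction j with
  | zero => exact ⟨{x}, by simp, by simp⟩
  | succ j ih =>
    obtain ⟨F, hF, hcov⟩ := ih
    have hρj : (0:ℝ) < ρ / 2 ^ j := by positivity
    choose G hG hGcov using fun c : X => hD c (ρ / 2 ^ j) hρj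
    refine ⟨F.biUnion G, ?_, ?_⟩
    · calc (F.biUnion G).card ≤ ∑ c ∈ F, (G c).card := Finset.card_biUnion_le
        _ ≤ ∑ _c ∈ F, 2 ^ D := Finset.sum_le_sum fun c _ => hG c
        _ = F.card * 2 ^ D := by rw [Finset.sum_const, smul_eq_mul]
        _ ≤ 2 ^ (j * D) * 2 ^ D := Nat.mul_le_mul_right _ hF
        _ = 2 ^ ((j + 1) * D) := by rw [← pow_add, add_mul, one_mul]
    · intro y hy
      obtain ⟨c, hc, hyc⟩ := Set.mem_iUnion₂.1 (hcov hy)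
      obtain ⟨c', hc', hyc'⟩ := Set.mem_iUnion₂.1 (hGcov c hyc)
      refine Set.mem_iUnion₂.2 ⟨c', Finset.mem_biUnion.2 ⟨c, hc, hc'⟩, ?_⟩
      have h2 : ρ / 2 ^ j / 2 = ρ / 2 ^ (j + 1) := by rw [div_div, pow_succ]
      rwa [← h2]

/-- Every point at level `ℓk - n` has an ancestor at level `ℓk` at distance at most
`2^(ℓk+1) - 2^(ℓk-n+1)`. -/
lemma ct_ancestor {X : Type*} [MetricSpace X] {S : Set X} (ct : CoverTree X S)
    (ℓk : ℤ) (hℓk2 : ℓk ≤ ct.lmax) :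
    ∀ n : ℕ, ct.lmin ≤ ℓk - n → ∀ u ∈ ct.T (ℓk - n),
      ∃ v ∈ ct.T ℓk, dist u v ≤ (2:ℝ) ^ (ℓk + 1) - (2:ℝ) ^ (ℓk - n + 1) := by
  intro n
  induction n with
  | zero => intro _ u hu; exact ⟨u, by simpa using hu, by simp⟩
  | succ n ih =>
    intro hmin u hu
    have hc : ((n + 1 : ℕ) : ℤ) = (n : ℤ) + 1 := by push_cast; ring
    rw [hc] at hmin hu ⊢
    have h2 : ℓk - ((n:ℤ) + 1) < ct.lmax := by omega
    have hw := ct.par_mem _ hmin h2 u hu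
    have hwd := ct.par_dist _ hmin h2 u hu
    have he : ℓk - ((n:ℤ) + 1) + 1 = ℓk - n := by ring
    rw [he] at hw hwd
    have hmin' : ct.lmin ≤ ℓk - (n:ℤ) := by omega
    obtain ⟨v, hv, hvd⟩ := ih hmin' _ hw
    refine ⟨v, hv, ?_⟩
    have hsplit : (2:ℝ) ^ (ℓk - (n:ℤ) + 1) = 2 * (2:ℝ) ^ (ℓk - (n:ℤ)) := by
      rw [zpow_add_one₀ (two_ne_zero)]; ring
    have he2 : ℓk - ((n:ℤ) + 1) + 1 = ℓk - (n:ℤ) := by ring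
    rw [he2]
    calc dist u v ≤ dist u (ct.par (ℓk - ((n:ℤ)+1)) u) + dist (ct.par (ℓk - ((n:ℤ)+1)) u) v :=
          dist_triangle _ _ _
      _ ≤ (2:ℝ) ^ (ℓk - (n:ℤ)) + ((2:ℝ) ^ (ℓk + 1) - (2:ℝ) ^ (ℓk - (n:ℤ) + 1)) :=
          add_le_add hwd hvd
      _ ≤ (2:ℝ) ^ (ℓk + 1) - (2:ℝ) ^ (ℓk - (n:ℤ)) := by rw [hsplit]; ring_nf; linarith

/-- Coreset size bound: in a metric space of doubling dimension `D`, if `|T ℓ(k)| ≤ k`,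
`0 < ε ≤ 8`, and `ℓ* = ℓ(k) − ⌈log₂(8/ε)⌉ ≥ lmin`, then
`|T ℓ*| ≤ k · 2^{(⌈log₂(8/ε)⌉+2)·D} ≤ k · (64/ε)^D`. -/
theorem stmt17 {X : Type*} [MetricSpace X] {S : Set X} {D : ℕ} (hD : HasDoublingDim X D)
    (ct : CoverTree X S)
    (k : ℕ) (hk : 1 ≤ k)
    (ℓk : ℤ) (hℓk1 : ct.lmin ≤ ℓk) (hℓk2 : ℓk ≤ ct.lmax)
    (hsmall : (ct.T ℓk).ncard ≤ k)
    (ε : ℝ) (hε1 : 0 < ε) (hε2 : ε ≤ 8)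
    (hstar : ct.lmin ≤ ℓk - ⌈Real.logb 2 (8 / ε)⌉) :
    (ct.T (ℓk - ⌈Real.logb 2 (8 / ε)⌉)).ncard
        ≤ k * 2 ^ ((⌈Real.logb 2 (8 / ε)⌉.toNat + 2) * D) ∧
    ((k * 2 ^ ((⌈Real.logb 2 (8 / ε)⌉.toNat + 2) * D) : ℕ) : ℝ)
        ≤ (k : ℝ) * (64 / ε) ^ D := by
  have hlogb : 0 ≤ Real.logb 2 (8 / ε) :=
    Real.logb_nonneg one_lt_two ((one_le_div hε1).2 hε2)
  have hceil0 : 0 ≤ ⌈Real.logb 2 (8 / ε)⌉ := Int.ceil_nonneg hlogb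
  set m : ℕ := ⌈Real.logb 2 (8 / ε)⌉.toNat with hm
  have hmZ : ((m : ℤ)) = ⌈Real.logb 2 (8 / ε)⌉ := Int.toNat_of_nonneg hceil0
  rw [← hmZ] at hstar ⊢
  set L : ℤ := ℓk - (m : ℤ) with hLdefL
  have hL2 : L ≤ ct.lmax := by omega
  constructor
  · -- the counting bound
    -- big balls around level-ℓk points cover level L
    have hρ : (0:ℝ) < (2:ℝ) ^ (ℓk + 1) := by positivity
    choose F hFcard hFcov using fun v : X => cover_iter hD (m + 2) v ((2:ℝ) ^ (ℓk + 1)) hρ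
    have hTKfin := ct.T_finite ℓk hℓk1 hℓk2
    have hTLfin := ct.T_finite L hstar hL2
    set TK := hTKfin.toFinset with hTK
    set G : Finset X := TK.biUnion F with hG
    have hGcard : G.card ≤ k * 2 ^ ((m + 2) * D) := by
      calc G.card ≤ ∑ c ∈ TK, (F c).card := Finset.card_biUnion_le
        _ ≤ ∑ _c ∈ TK, 2 ^ ((m + 2) * D) := Finset.sum_le_sum fun c _ => hFcard c
        _ = TK.card * 2 ^ ((m + 2) * D) := by rw [Finset.sum_const, smul_eq_mul]
        _ ≤ k * 2 ^ ((m + 2) * D) := by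
            apply Nat.mul_le_mul_right
            rwa [hTK, ← Set.ncard_eq_toFinset_card _ hTKfin]
    -- radius of small balls
    set r : ℝ := (2:ℝ) ^ (ℓk + 1) / 2 ^ (m + 2) with hr
    have hrL : 2 * r = (2:ℝ) ^ L := by
      rw [hr]
      have : ((2:ℝ) ^ (m + 2) : ℝ) = (2:ℝ) ^ ((m : ℤ) + 2) := by
        rw [← zpow_natCast]; push_cast; ring_nf
      rw [this, ← zpow_sub₀ (two_ne_zero)]
      have h1 : (2:ℝ) ^ L = (2:ℝ) ^ ((ℓk + 1 - ((m:ℤ) + 2)) + 1) := by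
        congr 1; omega
      rw [h1, zpow_add_one₀ (two_ne_zero)]; ring
    -- every point of T L is within r of some center in G
    have hcovL : ∀ u ∈ ct.T L, ∃ c ∈ G, dist u c ≤ r := by
      intro u hu
      obtain ⟨v, hv, hvd⟩ := ct_ancestor ct ℓk hℓk2 m hstar u hu
      have huball : u ∈ closedBall v ((2:ℝ) ^ (ℓk + 1)) := by
        rw [mem_closedBall]
        have : (0:ℝ) < (2:ℝ) ^ (L + 1) := by positivity
        rw [hLdefL] at this
        linarith
      obtain ⟨c, hc, hyc⟩ := Set.mem_iUnion₂.1 (hFcov v huball)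
      exact ⟨c, Finset.mem_biUnion.2 ⟨v, hTKfin.mem_toFinset.2 hv, hc⟩, mem_closedBall.1 hyc⟩
    -- injectivity from separation
    choose! cen hcenG hcend using hcovL
    have hinj : Set.InjOn cen (hTLfin.toFinset : Set X) := by
      intro u hu u' hu' heq
      by_contra hne
      have hu1 : u ∈ ct.T L := hTLfin.mem_toFinset.1 (by simpa using hu)
      have hu1' : u' ∈ ct.T L := hTLfin.mem_toFinset.1 (by simpa using hu')
      have hsep := ct.separated L hstar hL2 u hu1 u' hu1' hne
      have hd : dist u u' ≤ 2 * r := by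
        calc dist u u' ≤ dist u (cen u) + dist (cen u') u' := by
              rw [heq]; exact dist_triangle _ _ _
          _ ≤ r + r := add_le_add (hcend u hu1) (by rw [dist_comm]; exact hcend u' hu1')
          _ = 2 * r := by ring
      rw [hrL] at hd
      linarith
    have hmaps : ∀ u ∈ hTLfin.toFinset, cen u ∈ G := fun u hu =>
      hcenG u (hTLfin.mem_toFinset.1 hu)
    have := Finset.card_le_card_of_injOn cen hmaps hinj
    calc (ct.T L).ncard = hTLfin.toFinset.card := Set.ncard_eq_toFinset_card _ hTLfin
      _ ≤ G.card := this
      _ ≤ k * 2 ^ ((m + 2) * D) := hGcard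
  · -- the real bound
    have h2pow : (2:ℝ) ^ (m + 2) ≤ 64 / ε := by
      have hmle : (m : ℝ) ≤ Real.logb 2 (8 / ε) + 1 := by
        have := Int.ceil_le_floor_add_one (Real.logb 2 (8 / ε))
        have h1 : ((m : ℤ) : ℝ) ≤ Real.logb 2 (8 / ε) + 1 := by
          rw [hmZ]
          exact le_of_lt (Int.ceil_lt_add_one _)
        exact_mod_cast h1
      have hb : (2:ℝ) ^ (m : ℝ) ≤ (2:ℝ) ^ (Real.logb 2 (8 / ε) + 1) :=
        Real.rpow_le_rpow_of_exponent_le one_le_two hmle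
      have hlog : (2:ℝ) ^ (Real.logb 2 (8 / ε) + 1) = 16 / ε := by
        rw [Real.rpow_add two_pos, Real.rpow_logb two_pos (by norm_num) (by positivity),
          Real.rpow_one]
        ring
      have hnat : ((2:ℝ) ^ (m + 2) : ℝ) = (2:ℝ) ^ (m : ℝ) * 4 := by
        rw [pow_add, ← Real.rpow_natCast 2 m]; norm_num
      rw [hnat]
      rw [hlog] at hb
      have h4 : (16 / ε) * 4 = 64 / ε := by ring
      nlinarith [hb]
    have hD1 : ((2:ℝ) ^ (m + 2)) ^ D ≤ (64 / ε) ^ D :=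
      pow_le_pow_left₀ (by positivity) h2pow D
    push_cast
    rw [pow_mul]
    exact mul_le_mul_of_nonneg_left hD1 (by positivity)
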